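/- Suppose an inner policy improvement step π^core_old → π^core_new guarantees Q^{π^core_new}(s,a) ≥ Q^{π^core_old}(s,a) for all (s,a), let Δ = min_{(s,a)} (Q^{π^core_new}(s,a) − Q^{π^core_old}(s,a)), let N ≥ 4, and let C_0 be a uniform upper bound on |A^{π^core_new}(s,a)| and on |A^{π_old}((s,a'),a)|, where π_old is the mixed policy built from μ_old and π^core_old and π_mid is the mixed policy built from μ_old and π^core_new. If μ_old(s,a') ≤ Δ / (N · C_0 · Σ_{t=0}^∞ t γ^t) for all (s,a'), then Q^{π_mid}(s,a',a) − Q^{π_old}(s,a',a) ≥ (1 − 4/N)·Δ for all triples (s,a',a). -/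

import Mathlib

open scoped BigOperators

noncomputable section

/-- A probability distribution on a finite type, given as a nonnegative
function summing to one. -/
def IsDist {X : Type*} [Fintype X] (d : X → ℝ) : Prop :=
  (∀ x, 0 ≤ d x) ∧ ∑ x, d x = 1

/-- A transition kernel: for each state-action pair, a distribution on states. -/
def IsKernel {S A : Type*} [Fintype S] (P : S → A → S → ℝ) : Prop :=
  ∀ s a, IsDist (P s a)

/-- A (stationary) stochastic policy: for each state, a distribution on actions. -/
def IsPolicy {S A : Type*} [Fintype A] (π : S → A → ℝ) : Prop :=
  ∀ s, IsDist (π s)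

/-- The state-action distribution at time `t` of the trajectory generated by
policy `π` in the MDP with transition kernel `P`, started from the initial
state-action distribution `d0`. -/
def saDist {S A : Type*} [Fintype S] [Fintype A]
    (P : S → A → S → ℝ) (π : S → A → ℝ) (d0 : S × A → ℝ) : ℕ → S × A → ℝ
  | 0 => d0
  | t + 1 => fun q => ∑ p : S × A, saDist P π d0 t p * P p.1 p.2 q.1 * π q.1 q.2

/-- The state-action value function `Q^π(s,a)`:
expected discounted return starting at state `s`, taking action `a` first and
following `π` afterwards. -/
def Qval {S A : Type*} [Fintype S] [Fintype A] [DecidableEq S] [DecidableEq A]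
    (P : S → A → S → ℝ) (r : S → A → ℝ) (γ : ℝ) (π : S → A → ℝ) (s : S) (a : A) : ℝ :=
  ∑' t : ℕ, γ ^ t *
    ∑ q : S × A, saDist P π (fun p => if p = (s, a) then 1 else 0) t q * r q.1 q.2

/-- The state value function `V^π(s)`. -/
def Vval {S A : Type*} [Fintype S] [Fintype A] [DecidableEq S] [DecidableEq A]
    (P : S → A → S → ℝ) (r : S → A → ℝ) (γ : ℝ) (π : S → A → ℝ) (s : S) : ℝ :=
  ∑ a : A, π s a * Qval P r γ π s a

/-- The advantage function `A^π(s,a) = Q^π(s,a) − V^π(s)`. -/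
def Adv {S A : Type*} [Fintype S] [Fintype A] [DecidableEq S] [DecidableEq A]
    (P : S → A → S → ℝ) (r : S → A → ℝ) (γ : ℝ) (π : S → A → ℝ) (s : S) (a : A) : ℝ :=
  Qval P r γ π s a - Vval P r γ π s

set_option linter.unusedSectionVars false
set_option linter.unusedTactic false

section Lemmas

variable {S A : Type*} [Fintype S] [Fintype A] [DecidableEq S] [DecidableEq A]
variable (P : S → A → S → ℝ) (r : S → A → ℝ) (γ : ℝ) (π : S → A → ℝ)

lemma saDist_nonneg (hP : IsKernel P) (hπ : IsPolicy π) {d0 : S × A → ℝ}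
    (hd0 : ∀ p, 0 ≤ d0 p) : ∀ t q, 0 ≤ saDist P π d0 t q := by
  intro t
  induction t with
  | zero => exact hd0
  | succ t ih =>
    intro q
    refine Finset.sum_nonneg fun p _ => ?_
    exact mul_nonneg (mul_nonneg (ih p) ((hP p.1 p.2).1 q.1)) ((hπ q.1).1 q.2)

lemma saDist_sum (hP : IsKernel P) (hπ : IsPolicy π) (d0 : S × A → ℝ) :
    ∀ t, ∑ q : S × A, saDist P π d0 t q = ∑ p : S × A, d0 p := by
  intro t
  induction t with
  | zero => rfl
  | succ t ih =>
    rw [← ih]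
    show ∑ q : S × A, ∑ p : S × A, saDist P π d0 t p * P p.1 p.2 q.1 * π q.1 q.2 = _
    rw [Finset.sum_comm]
    refine Finset.sum_congr rfl fun p _ => ?_
    rw [Fintype.sum_prod_type]
    have : ∀ s' : S, ∑ a : A, saDist P π d0 t p * P p.1 p.2 s' * π s' a
        = saDist P π d0 t p * P p.1 p.2 s' := by
      intro s'
      rw [← Finset.mul_sum, (hπ s').2, mul_one]
    simp_rw [this, ← Finset.mul_sum, (hP p.1 p.2).2, mul_one]

lemma saDist_shift (d0 : S × A → ℝ) (t : ℕ) :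
    saDist P π d0 (t + 1)
      = saDist P π (fun q => ∑ p : S × A, d0 p * P p.1 p.2 q.1 * π q.1 q.2) t := by
  induction t with
  | zero => rfl
  | succ t ih => show (fun q => ∑ p : S × A, saDist P π d0 (t+1) p * _ * _) = _
                 rw [ih]; rfl

lemma saDist_linear (d0 : S × A → ℝ) : ∀ (t : ℕ) (q : S × A),
    saDist P π d0 t q
      = ∑ p : S × A, d0 p * saDist P π (fun x => if x = p then 1 else 0) t q := by
  intro t
  induction t with
  | zero =>
    intro q
    simp [saDist, Finset.sum_ite_eq', mul_comm]
  | succ t ih =>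
    intro q
    show ∑ p : S × A, saDist P π d0 t p * P p.1 p.2 q.1 * π q.1 q.2 = _
    have : ∀ p' : S × A, d0 p' * saDist P π (fun x => if x = p' then 1 else 0) (t+1) q
        = ∑ p : S × A, d0 p' * saDist P π (fun x => if x = p' then 1 else 0) t p
            * P p.1 p.2 q.1 * π q.1 q.2 := by
      intro p'
      show d0 p' * ∑ p : S × A, _ = _
      rw [Finset.mul_sum]
      refine Finset.sum_congr rfl fun p _ => by ring
    simp_rw [this]
    rw [Finset.sum_comm]
    refine Finset.sum_congr rfl fun p _ => ?_
    rw [ih p]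
    rw [Finset.sum_mul, Finset.sum_mul]


lemma abs_expect_le (hP : IsKernel P) (hπ : IsPolicy π) {d0 : S × A → ℝ}
    (hd0 : ∀ p, 0 ≤ d0 p) (hd1 : ∑ p : S × A, d0 p = 1) (t : ℕ) :
    |∑ q : S × A, saDist P π d0 t q * r q.1 q.2| ≤ ∑ q : S × A, |r q.1 q.2| := by
  calc |∑ q : S × A, saDist P π d0 t q * r q.1 q.2|
      ≤ ∑ q : S × A, |saDist P π d0 t q * r q.1 q.2| := Finset.abs_sum_le_sum_abs _ _
    _ ≤ ∑ q : S × A, saDist P π d0 t q * |r q.1 q.2| := by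
        refine Finset.sum_le_sum fun q _ => ?_
        rw [abs_mul, abs_of_nonneg (saDist_nonneg P π hP hπ hd0 t q)]
    _ ≤ ∑ q : S × A, saDist P π d0 t q * (∑ x : S × A, |r x.1 x.2|) := by
        refine Finset.sum_le_sum fun q _ => ?_
        refine mul_le_mul_of_nonneg_left ?_ (saDist_nonneg P π hP hπ hd0 t q)
        exact Finset.single_le_sum (f := fun x : S × A => |r x.1 x.2|) (fun x _ => abs_nonneg _) (Finset.mem_univ q)
    _ = (∑ q : S × A, saDist P π d0 t q) * (∑ x : S × A, |r x.1 x.2|) := by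
        rw [Finset.sum_mul]
    _ = ∑ q : S × A, |r q.1 q.2| := by rw [saDist_sum P π hP hπ, hd1, one_mul]

lemma delta_dist (p0 : S × A) :
    (∀ p : S × A, 0 ≤ (if p = p0 then (1:ℝ) else 0)) ∧
      ∑ p : S × A, (if p = p0 then (1:ℝ) else 0) = 1 := by
  constructor
  · intro p; split <;> norm_num
  · simp [Finset.sum_ite_eq']

lemma qval_summable (hP : IsKernel P) (hπ : IsPolicy π) (hγ0 : 0 ≤ γ) (hγ1 : γ < 1)
    {d0 : S × A → ℝ} (hd0 : ∀ p, 0 ≤ d0 p) (hd1 : ∑ p : S × A, d0 p = 1) :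
    Summable (fun t : ℕ => γ ^ t * ∑ q : S × A, saDist P π d0 t q * r q.1 q.2) := by
  refine Summable.of_norm_bounded
    (g := fun t : ℕ => (∑ q : S × A, |r q.1 q.2|) * γ ^ t) ?_ ?_
  · exact (summable_geometric_of_lt_one hγ0 hγ1).mul_left _
  · intro t
    rw [Real.norm_eq_abs, abs_mul, abs_pow, abs_of_nonneg hγ0, mul_comm]
    exact mul_le_mul_of_nonneg_right (abs_expect_le P r π hP hπ hd0 hd1 t)
      (pow_nonneg hγ0 t)

lemma bellman (hP : IsKernel P) (hπ : IsPolicy π) (hγ0 : 0 ≤ γ) (hγ1 : γ < 1)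
    (s : S) (a : A) :
    Qval P r γ π s a
      = r s a + γ * ∑ p : S × A, P s a p.1 * π p.1 p.2 * Qval P r γ π p.1 p.2 := by
  have hsum := qval_summable P r γ π hP hπ hγ0 hγ1 (delta_dist (S := S) (A := A) (s, a)).1
    (delta_dist (S := S) (A := A) (s, a)).2
  rw [Qval, Summable.tsum_eq_zero_add hsum]
  congr 1
  · simp [saDist, Finset.sum_ite_eq']
  · -- shifted part
    have hshift : ∀ t : ℕ, saDist P π (fun p => if p = (s, a) then (1:ℝ) else 0) (t + 1)
        = saDist P π (fun q => P s a q.1 * π q.1 q.2) t := by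
      intro t
      rw [saDist_shift]
      congr 1
      funext q
      simp [Finset.sum_ite_eq']
    have hlin : ∀ t : ℕ, ∑ q : S × A, saDist P π (fun q => P s a q.1 * π q.1 q.2) t q * r q.1 q.2
        = ∑ p : S × A, P s a p.1 * π p.1 p.2 *
            ∑ q : S × A, saDist P π (fun x => if x = p then 1 else 0) t q * r q.1 q.2 := by
      intro t
      have : ∀ q : S × A, saDist P π (fun q => P s a q.1 * π q.1 q.2) t q
          = ∑ p : S × A, P s a p.1 * π p.1 p.2 *
              saDist P π (fun x => if x = p then 1 else 0) t q :=
        fun q => saDist_linear P π _ t q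
      simp_rw [this, Finset.sum_mul, Finset.mul_sum]
      rw [Finset.sum_comm]
      refine Finset.sum_congr rfl fun p _ => Finset.sum_congr rfl fun q _ => by ring
    calc (∑' t : ℕ, γ ^ (t + 1) *
            ∑ q : S × A, saDist P π (fun p => if p = (s, a) then (1:ℝ) else 0) (t+1) q * r q.1 q.2)
        = ∑' t : ℕ, γ * (γ ^ t *
            ∑ p : S × A, P s a p.1 * π p.1 p.2 *
              ∑ q : S × A, saDist P π (fun x => if x = p then 1 else 0) t q * r q.1 q.2) := by
          refine tsum_congr fun t => ?_
          rw [hshift t, hlin t, pow_succ]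
          ring
      _ = γ * ∑' t : ℕ, (γ ^ t *
            ∑ p : S × A, P s a p.1 * π p.1 p.2 *
              ∑ q : S × A, saDist P π (fun x => if x = p then 1 else 0) t q * r q.1 q.2) :=
          tsum_mul_left
      _ = γ * ∑ p : S × A, P s a p.1 * π p.1 p.2 * Qval P r γ π p.1 p.2 := by
          congr 1
          have : ∀ t : ℕ, γ ^ t *
              ∑ p : S × A, P s a p.1 * π p.1 p.2 *
                ∑ q : S × A, saDist P π (fun x => if x = p then 1 else 0) t q * r q.1 q.2
              = ∑ p : S × A, P s a p.1 * π p.1 p.2 *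
                  (γ ^ t * ∑ q : S × A, saDist P π (fun x => if x = p then 1 else 0) t q * r q.1 q.2) := by
            intro t
            rw [Finset.mul_sum]
            exact Finset.sum_congr rfl fun p _ => by ring
          simp_rw [this]
          rw [Summable.tsum_finsetSum (fun p _ => ((qval_summable P r γ π hP hπ hγ0 hγ1
            (delta_dist p).1 (delta_dist p).2).mul_left _))]
          refine Finset.sum_congr rfl fun p _ => ?_
          rw [tsum_mul_left]
          rfl


lemma sum_P_pi_eq_one (hP : IsKernel P) (hπ : IsPolicy π) (s : S) (a : A) :
    ∑ p : S × A, P s a p.1 * π p.1 p.2 = 1 := by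
  rw [Fintype.sum_prod_type]
  simp_rw [← Finset.mul_sum]
  have : ∀ s' : S, P s a s' * ∑ a' : A, π s' a' = P s a s' := by
    intro s'; rw [(hπ s').2, mul_one]
  simp_rw [this, (hP s a).2]

lemma qval_diff_bound [Nonempty S] [Nonempty A]
    (hP : IsKernel P) (hπ : IsPolicy π) {π' : S → A → ℝ} (hπ' : IsPolicy π')
    (hγ0 : 0 ≤ γ) (hγ1 : γ < 1) (ε : ℝ)
    (hg : ∀ s' : S, |∑ b : A, (π' s' b - π s' b) * Qval P r γ π s' b| ≤ ε) :
    ∀ s a, |Qval P r γ π' s a - Qval P r γ π s a| ≤ γ * ε / (1 - γ) := by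
  set D : S × A → ℝ := fun p => Qval P r γ π' p.1 p.2 - Qval P r γ π p.1 p.2 with hD
  have hne : (Finset.univ : Finset (S × A)).Nonempty := Finset.univ_nonempty
  set M : ℝ := Finset.univ.sup' hne (fun p => |D p|) with hM
  have hMle : ∀ p : S × A, |D p| ≤ M := fun p => Finset.le_sup' (fun p => |D p|) (Finset.mem_univ p)
  have key : ∀ s a, |D (s, a)| ≤ γ * (M + ε) := by
    intro s a
    have hbell : D (s, a) = γ * ((∑ p : S × A, P s a p.1 * π' p.1 p.2 * D p)
        + ∑ p : S × A, P s a p.1 * ((π' p.1 p.2 - π p.1 p.2) * Qval P r γ π p.1 p.2)) := by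
      have hterm : ∀ p : S × A,
          P s a p.1 * π' p.1 p.2 * Qval P r γ π' p.1 p.2
            - P s a p.1 * π p.1 p.2 * Qval P r γ π p.1 p.2
          = P s a p.1 * π' p.1 p.2 * D p
            + P s a p.1 * ((π' p.1 p.2 - π p.1 p.2) * Qval P r γ π p.1 p.2) := by
        intro p; simp only [hD]; ring
      calc D (s, a)
          = Qval P r γ π' s a - Qval P r γ π s a := rfl
        _ = γ * ((∑ p : S × A, P s a p.1 * π' p.1 p.2 * Qval P r γ π' p.1 p.2)
              - ∑ p : S × A, P s a p.1 * π p.1 p.2 * Qval P r γ π p.1 p.2) := by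
            rw [bellman P r γ π hP hπ hγ0 hγ1 s a, bellman P r γ π' hP hπ' hγ0 hγ1 s a]
            ring
        _ = γ * ∑ p : S × A, (P s a p.1 * π' p.1 p.2 * Qval P r γ π' p.1 p.2
              - P s a p.1 * π p.1 p.2 * Qval P r γ π p.1 p.2) := by
            rw [Finset.sum_sub_distrib]
        _ = _ := by
            rw [← Finset.sum_add_distrib]
            congr 1
            exact Finset.sum_congr rfl fun p _ => hterm p
    have h1 : |∑ p : S × A, P s a p.1 * π' p.1 p.2 * D p| ≤ M := by
      calc |∑ p : S × A, P s a p.1 * π' p.1 p.2 * D p|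
          ≤ ∑ p : S × A, |P s a p.1 * π' p.1 p.2 * D p| := Finset.abs_sum_le_sum_abs _ _
        _ ≤ ∑ p : S × A, P s a p.1 * π' p.1 p.2 * M := by
            refine Finset.sum_le_sum fun p _ => ?_
            rw [abs_mul, abs_of_nonneg (mul_nonneg ((hP s a).1 p.1) ((hπ' p.1).1 p.2))]
            exact mul_le_mul_of_nonneg_left (hMle p)
              (mul_nonneg ((hP s a).1 p.1) ((hπ' p.1).1 p.2))
        _ = M := by rw [← Finset.sum_mul, sum_P_pi_eq_one P π' hP hπ' s a, one_mul]
    have h2 : |∑ p : S × A, P s a p.1 * ((π' p.1 p.2 - π p.1 p.2) * Qval P r γ π p.1 p.2)| ≤ ε := by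
      have hre : ∑ p : S × A, P s a p.1 * ((π' p.1 p.2 - π p.1 p.2) * Qval P r γ π p.1 p.2)
          = ∑ s' : S, P s a s' * ∑ b : A, (π' s' b - π s' b) * Qval P r γ π s' b := by
        rw [Fintype.sum_prod_type]
        exact Finset.sum_congr rfl fun s' _ => by rw [Finset.mul_sum]
      rw [hre]
      calc |∑ s' : S, P s a s' * ∑ b : A, (π' s' b - π s' b) * Qval P r γ π s' b|
          ≤ ∑ s' : S, |P s a s' * ∑ b : A, (π' s' b - π s' b) * Qval P r γ π s' b| :=
            Finset.abs_sum_le_sum_abs _ _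
        _ ≤ ∑ s' : S, P s a s' * ε := by
            refine Finset.sum_le_sum fun s' _ => ?_
            rw [abs_mul, abs_of_nonneg ((hP s a).1 s')]
            exact mul_le_mul_of_nonneg_left (hg s') ((hP s a).1 s')
        _ = ε := by rw [← Finset.sum_mul, (hP s a).2, one_mul]
    rw [hbell, abs_mul, abs_of_nonneg hγ0]
    refine mul_le_mul_of_nonneg_left ?_ hγ0
    calc |(∑ p : S × A, P s a p.1 * π' p.1 p.2 * D p)
        + ∑ p : S × A, P s a p.1 * ((π' p.1 p.2 - π p.1 p.2) * Qval P r γ π p.1 p.2)|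
        ≤ _ + _ := abs_add_le _ _
      _ ≤ M + ε := add_le_add h1 h2
  have hMb : M ≤ γ * (M + ε) := by
    obtain ⟨p0, _, hp0⟩ := Finset.exists_mem_eq_sup' hne (fun p => |D p|)
    calc M = |D p0| := hp0
      _ ≤ γ * (M + ε) := by simpa using key p0.1 p0.2
  have hMfin : M ≤ γ * ε / (1 - γ) := by
    rw [le_div_iff₀ (by linarith : (0:ℝ) < 1 - γ)]
    nlinarith
  intro s a
  exact le_trans (hMle (s, a)) hMfin

lemma qval_unique [Nonempty S] [Nonempty A]
    (hP : IsKernel P) (hπ : IsPolicy π)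
    (hγ0 : 0 ≤ γ) (hγ1 : γ < 1) (f : S → A → ℝ)
    (hf : ∀ s a, f s a = r s a + γ * ∑ p : S × A, P s a p.1 * π p.1 p.2 * f p.1 p.2) :
    ∀ s a, f s a = Qval P r γ π s a := by
  set D : S × A → ℝ := fun p => f p.1 p.2 - Qval P r γ π p.1 p.2 with hD
  have hne : (Finset.univ : Finset (S × A)).Nonempty := Finset.univ_nonempty
  set M : ℝ := Finset.univ.sup' hne (fun p => |D p|) with hM
  have hMle : ∀ p : S × A, |D p| ≤ M := fun p => Finset.le_sup' (fun p => |D p|) (Finset.mem_univ p)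
  have key : ∀ s a, |D (s, a)| ≤ γ * M := by
    intro s a
    have hbell : D (s, a) = γ * ∑ p : S × A, P s a p.1 * π p.1 p.2 * D p := by
      calc D (s, a)
          = f s a - Qval P r γ π s a := rfl
        _ = γ * ((∑ p : S × A, P s a p.1 * π p.1 p.2 * f p.1 p.2)
              - ∑ p : S × A, P s a p.1 * π p.1 p.2 * Qval P r γ π p.1 p.2) := by
            rw [hf s a, bellman P r γ π hP hπ hγ0 hγ1 s a]
            ring
        _ = _ := by
            rw [← Finset.sum_sub_distrib]
            congr 1
            exact Finset.sum_congr rfl fun p _ => by simp only [hD]; ring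
    rw [hbell, abs_mul, abs_of_nonneg hγ0]
    refine mul_le_mul_of_nonneg_left ?_ hγ0
    calc |∑ p : S × A, P s a p.1 * π p.1 p.2 * D p|
        ≤ ∑ p : S × A, |P s a p.1 * π p.1 p.2 * D p| := Finset.abs_sum_le_sum_abs _ _
      _ ≤ ∑ p : S × A, P s a p.1 * π p.1 p.2 * M := by
          refine Finset.sum_le_sum fun p _ => ?_
          rw [abs_mul, abs_of_nonneg (mul_nonneg ((hP s a).1 p.1) ((hπ p.1).1 p.2))]
          exact mul_le_mul_of_nonneg_left (hMle p)
            (mul_nonneg ((hP s a).1 p.1) ((hπ p.1).1 p.2))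
      _ = M := by rw [← Finset.sum_mul, sum_P_pi_eq_one P π hP hπ s a, one_mul]
  have hM0 : M ≤ 0 := by
    obtain ⟨p0, _, hp0⟩ := Finset.exists_mem_eq_sup' hne (fun p => |D p|)
    have h1 : M ≤ γ * M :=
      le_trans (le_of_eq hp0) (by simpa using key p0.1 p0.2)
    have h2 : 0 ≤ M := le_trans (abs_nonneg _) (hMle (Classical.arbitrary (S × A)))
    nlinarith
  intro s a
  have h0 : |D (s, a)| ≤ 0 := le_trans (hMle (s, a)) hM0
  have : D (s, a) = 0 := abs_eq_zero.mp (le_antisymm h0 (abs_nonneg _))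
  simpa [hD, sub_eq_zero] using this

end Lemmas

section Series

lemma tsum_geom_aux {γ : ℝ} (hγ0 : 0 ≤ γ) (hγ1 : γ < 1) :
    γ / (1 - γ) ≤ ∑' t : ℕ, (t : ℝ) * γ ^ t := by
  have hsum1 : Summable (fun t : ℕ => (t : ℝ) * γ ^ t) := by
    simpa [pow_one] using
      summable_pow_mul_geometric_of_norm_lt_one 1
        (by rw [Real.norm_eq_abs, abs_of_nonneg hγ0]; exact hγ1)
  have hsum2 : Summable (fun t : ℕ => ((t : ℝ) + 1) * γ ^ (t + 1)) := by
    have := (summable_nat_add_iff 1).mpr hsum1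
    simpa [Nat.cast_add, Nat.cast_one] using this
  have hsum3 : Summable (fun t : ℕ => γ ^ (t + 1)) := by
    simpa [pow_succ'] using (summable_geometric_of_lt_one hγ0 hγ1).mul_left γ
  have h0 : ∑' t : ℕ, (t : ℝ) * γ ^ t = ∑' t : ℕ, ((t : ℝ) + 1) * γ ^ (t + 1) := by
    rw [Summable.tsum_eq_zero_add hsum1]
    simp
  rw [h0]
  have h1 : ∑' t : ℕ, γ ^ (t + 1) ≤ ∑' t : ℕ, ((t : ℝ) + 1) * γ ^ (t + 1) := by
    refine Summable.tsum_le_tsum (fun t => ?_) hsum3 hsum2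
    have : (0:ℝ) ≤ γ ^ (t + 1) := pow_nonneg hγ0 _
    nlinarith [Nat.cast_nonneg (α := ℝ) t]
  have h2 : ∑' t : ℕ, γ ^ (t + 1) = γ / (1 - γ) := by
    have : ∀ t : ℕ, γ ^ (t + 1) = γ * γ ^ t := fun t => by rw [pow_succ']
    simp_rw [this]
    rw [tsum_mul_left, tsum_geometric_of_lt_one hγ0 hγ1, div_eq_mul_inv]
  linarith

end Series

/-- Transition kernel of the augmented MDP whose states are pairs
`(state, previously executed action)` : `((s,a'),a) ↦ (s',a)` with `s' ~ P(·|s,a)`. -/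
def augP {S A : Type*} [DecidableEq A] (P : S → A → S → ℝ) :
    S × A → A → S × A → ℝ :=
  fun x a y => if y.2 = a then P x.1 a y.1 else 0

/-- Reward of the augmented MDP: `r((s,a'),a) = r(s,a)`. -/
def augR {S A : Type*} (r : S → A → ℝ) : S × A → A → ℝ :=
  fun x a => r x.1 a

/-- A policy on the base MDP viewed as a policy on the augmented MDP. -/
def liftPolicy {S A : Type*} (π : S → A → ℝ) : S × A → A → ℝ :=
  fun x a => π x.1 a

/-- The mixed (PIC-augmented) policy
`π(·|s,a') = μ(s,a')·δ_{a'} + (1−μ(s,a'))·π^core(·|s)`,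
a stationary policy on the augmented MDP. -/
def mixed {S A : Type*} [DecidableEq A] (μ : S → A → ℝ) (πc : S → A → ℝ) :
    S × A → A → ℝ :=
  fun x a => μ x.1 x.2 * (if a = x.2 then 1 else 0) + (1 - μ x.1 x.2) * πc x.1 a



section Aug

variable {S A : Type*} [Fintype S] [Fintype A] [DecidableEq S] [DecidableEq A]
variable (P : S → A → S → ℝ) (r : S → A → ℝ) (γ : ℝ)

lemma augP_kernel (hP : IsKernel P) : IsKernel (augP P) := by
  intro x a
  constructor
  · intro y
    unfold augP
    split
    · exact (hP x.1 a).1 y.1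
    · exact le_rfl
  · rw [Fintype.sum_prod_type_right]
    unfold augP
    have h : ∀ b' : A, (∑ s' : S, if b' = a then P x.1 a s' else 0)
        = if b' = a then (1:ℝ) else 0 := by
      intro b'
      split
      · exact (hP x.1 a).2
      · simp
    simp only [h]
    simp

lemma lift_policy (π : S → A → ℝ) (hπ : IsPolicy π) : IsPolicy (liftPolicy π) :=
  fun x => ⟨fun a => (hπ x.1).1 a, (hπ x.1).2⟩

lemma mixed_policy (μ : S → A → ℝ) (hμ01 : ∀ s a, μ s a ∈ Set.Icc (0:ℝ) 1)
    (πc : S → A → ℝ) (hπc : IsPolicy πc) : IsPolicy (mixed μ πc) := by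
  intro x
  obtain ⟨hμ0, hμ1⟩ := hμ01 x.1 x.2
  constructor
  · intro a
    unfold mixed
    have h1 : (0:ℝ) ≤ if a = x.2 then (1:ℝ) else 0 := by split <;> norm_num
    exact add_nonneg (mul_nonneg hμ0 h1)
      (mul_nonneg (by linarith) ((hπc x.1).1 a))
  · unfold mixed
    rw [Finset.sum_add_distrib, ← Finset.mul_sum, ← Finset.mul_sum,
      Finset.sum_ite_eq' Finset.univ x.2 (fun _ => (1:ℝ))]
    simp [(hπc x.1).2]

lemma qval_lift [Nonempty S] [Nonempty A] (hP : IsKernel P)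
    (hγ0 : 0 ≤ γ) (hγ1 : γ < 1) (πc : S → A → ℝ) (hπc : IsPolicy πc) :
    ∀ (x : S × A) (a : A),
      Qval (augP P) (augR r) γ (liftPolicy πc) x a = Qval P r γ πc x.1 a := by
  have := qval_unique (augP P) (augR r) γ (liftPolicy πc)
    (augP_kernel P hP) (lift_policy πc hπc) hγ0 hγ1
    (fun x a => Qval P r γ πc x.1 a) ?_
  · intro x a
    exact (this x a).symm
  · intro x a
    show Qval P r γ πc x.1 a = _
    rw [bellman P r γ πc hP hπc hγ0 hγ1 x.1 a]
    congr 1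
    congr 1
    symm
    calc ∑ p : (S × A) × A, augP P x a p.1 * liftPolicy πc p.1 p.2 * Qval P r γ πc p.1.1 p.2
        = ∑ y : S × A, ∑ b : A, (if y.2 = a then P x.1 a y.1 else 0) * πc y.1 b
            * Qval P r γ πc y.1 b := by
          rw [Fintype.sum_prod_type]; rfl
      _ = ∑ s' : S, ∑ b' : A, (if b' = a then
            ∑ b : A, P x.1 a s' * πc s' b * Qval P r γ πc s' b else 0) := by
          rw [Fintype.sum_prod_type]
          refine Finset.sum_congr rfl fun s' _ => Finset.sum_congr rfl fun b' _ => ?_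
          split
          · rfl
          · simp
      _ = ∑ s' : S, ∑ b : A, P x.1 a s' * πc s' b * Qval P r γ πc s' b := by
          refine Finset.sum_congr rfl fun s' _ => ?_
          rw [Finset.sum_ite_eq' Finset.univ a]
          simp
      _ = ∑ p : S × A, P x.1 a p.1 * πc p.1 p.2 * Qval P r γ πc p.1 p.2 := by
          rw [Fintype.sum_prod_type]

end Aug

/-- **Lemma 1 (Intermediate Policy Improvement).**
Suppose an inner policy improvement step `πcOld → πcNew` guarantees
`Q^{πcNew}(s,a) ≥ Q^{πcOld}(s,a)` for all `(s,a)`, let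
`Δ = min_{(s,a)} (Q^{πcNew}(s,a) − Q^{πcOld}(s,a))`, let `N ≥ 4`, and let
`C0` be a uniform upper bound on `|A^{πcNew}(s,a)|` and on
`|A^{πOld}((s,a'),a)|`, where `πOld` is the mixed policy built from `μOld`
and `πcOld` and `πMid` the mixed policy built from `μOld` and `πcNew`.
If `μOld(s,a') ≤ Δ / (N · C0 · Σ_{t=0}^∞ t γ^t)` for all `(s,a')`, then
`Q^{πMid}(s,a',a) − Q^{πOld}(s,a',a) ≥ (1 − 4/N)·Δ` for all `(s,a',a)`. -/
theorem intermediate_policy_improvement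
    {S A : Type*} [Fintype S] [Fintype A] [Nonempty S] [Nonempty A]
    [DecidableEq S] [DecidableEq A]
    (P : S → A → S → ℝ) (hP : IsKernel P)
    (r : S → A → ℝ) (γ : ℝ) (hγ0 : 0 ≤ γ) (hγ1 : γ < 1)
    (πcOld πcNew : S → A → ℝ) (hπcOld : IsPolicy πcOld) (hπcNew : IsPolicy πcNew)
    (μOld : S → A → ℝ) (hμ01 : ∀ s a, μOld s a ∈ Set.Icc (0 : ℝ) 1)
    (hQ : ∀ s a, Qval P r γ πcOld s a ≤ Qval P r γ πcNew s a)
    (Δ : ℝ)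
    (hΔ : Δ = ⨅ p : S × A, (Qval P r γ πcNew p.1 p.2 - Qval P r γ πcOld p.1 p.2))
    (N : ℝ) (hN : 4 ≤ N)
    (C0 : ℝ)
    (hC0new : ∀ s a, |Adv P r γ πcNew s a| ≤ C0)
    (hC0old : ∀ (x : S × A) (a : A),
      |Adv (augP P) (augR r) γ (mixed μOld πcOld) x a| ≤ C0)
    (hμ : ∀ s a', μOld s a' ≤ Δ / (N * C0 * ∑' t : ℕ, (t : ℝ) * γ ^ t)) :
    ∀ (s : S) (a' a : A),
      (1 - 4 / N) * Δ ≤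
        Qval (augP P) (augR r) γ (mixed μOld πcNew) (s, a') a -
          Qval (augP P) (augR r) γ (mixed μOld πcOld) (s, a') a := by
  set T : ℝ := ∑' t : ℕ, (t : ℝ) * γ ^ t with hT
  set Bv : ℝ := Δ / (N * C0 * T) with hBv
  have hPa : IsKernel (augP P) := augP_kernel P hP
  have hLNew : IsPolicy (liftPolicy πcNew) := lift_policy πcNew hπcNew
  have hLOld : IsPolicy (liftPolicy πcOld) := lift_policy πcOld hπcOld
  have hMNew : IsPolicy (mixed μOld πcNew) := mixed_policy μOld hμ01 πcNew hπcNew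
  have hMOld : IsPolicy (mixed μOld πcOld) := mixed_policy μOld hμ01 πcOld hπcOld
  have hC0nn : 0 ≤ C0 := le_trans (abs_nonneg _)
    (hC0new (Classical.arbitrary S) (Classical.arbitrary A))
  have hNpos : (0:ℝ) < N := by linarith
  have hμnn : ∀ s a, 0 ≤ μOld s a := fun s a => (hμ01 s a).1
  have hBvnn : 0 ≤ Bv := le_trans (hμnn (Classical.arbitrary S) (Classical.arbitrary A))
    (hμ (Classical.arbitrary S) (Classical.arbitrary A))
  have hΔ0 : 0 ≤ Δ := by
    rw [hΔ]
    exact le_ciInf fun p => sub_nonneg.mpr (hQ p.1 p.2)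
  have hΔle : ∀ (s : S) (a : A), Δ ≤ Qval P r γ πcNew s a - Qval P r γ πcOld s a := by
    intro s a
    rw [hΔ]
    exact ciInf_le (Set.Finite.bddBelow (Set.finite_range _)) (s, a)
  -- step (i): |Q^{πMid} - Q^{lift new}| ≤ γ (Bv C0) / (1-γ)
  have hgNew : ∀ x : S × A,
      |∑ b : A, (mixed μOld πcNew x b - liftPolicy πcNew x b) *
        Qval (augP P) (augR r) γ (liftPolicy πcNew) x b| ≤ Bv * C0 := by
    intro x
    have hcol : ∀ b : A,
        (mixed μOld πcNew x b - liftPolicy πcNew x b) *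
          Qval (augP P) (augR r) γ (liftPolicy πcNew) x b
        = μOld x.1 x.2 * (if b = x.2 then Qval P r γ πcNew x.1 b else 0)
          - μOld x.1 x.2 * (πcNew x.1 b * Qval P r γ πcNew x.1 b) := by
      intro b
      rw [qval_lift P r γ hP hγ0 hγ1 πcNew hπcNew x b]
      simp only [mixed, liftPolicy]
      split <;> ring
    have hsum : ∑ b : A, (mixed μOld πcNew x b - liftPolicy πcNew x b) *
          Qval (augP P) (augR r) γ (liftPolicy πcNew) x b
        = μOld x.1 x.2 * Adv P r γ πcNew x.1 x.2 := by
      rw [Finset.sum_congr rfl fun b _ => hcol b, Finset.sum_sub_distrib,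
        ← Finset.mul_sum, ← Finset.mul_sum,
        Finset.sum_ite_eq' Finset.univ x.2 (fun b => Qval P r γ πcNew x.1 b)]
      simp only [Finset.mem_univ, if_true]
      rw [← mul_sub]
      rfl
    rw [hsum, abs_mul, abs_of_nonneg (hμnn x.1 x.2)]
    exact mul_le_mul (hμ x.1 x.2) (hC0new x.1 x.2) (abs_nonneg _) hBvnn
  -- step (iii): |Q^{lift old} - Q^{πOld}| ≤ γ (2 Bv C0) / (1-γ)
  have hgOld : ∀ x : S × A,
      |∑ b : A, (liftPolicy πcOld x b - mixed μOld πcOld x b) *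
        Qval (augP P) (augR r) γ (mixed μOld πcOld) x b| ≤ Bv * C0 + Bv * C0 := by
    intro x
    have hQA : ∀ b : A, Qval (augP P) (augR r) γ (mixed μOld πcOld) x b
        = Adv (augP P) (augR r) γ (mixed μOld πcOld) x b
          + Vval (augP P) (augR r) γ (mixed μOld πcOld) x := by
      intro b; rw [Adv]; ring
    have hcol : ∀ b : A,
        (liftPolicy πcOld x b - mixed μOld πcOld x b) *
          Qval (augP P) (augR r) γ (mixed μOld πcOld) x b
        = μOld x.1 x.2 * (πcOld x.1 b *
            (Adv (augP P) (augR r) γ (mixed μOld πcOld) x b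
              + Vval (augP P) (augR r) γ (mixed μOld πcOld) x))
          - μOld x.1 x.2 * (if b = x.2 then
              Adv (augP P) (augR r) γ (mixed μOld πcOld) x b
                + Vval (augP P) (augR r) γ (mixed μOld πcOld) x else 0) := by
      intro b
      rw [hQA b]
      simp only [mixed, liftPolicy]
      split <;> ring
    have hsum : ∑ b : A, (liftPolicy πcOld x b - mixed μOld πcOld x b) *
          Qval (augP P) (augR r) γ (mixed μOld πcOld) x b
        = μOld x.1 x.2 * ((∑ b : A, πcOld x.1 b *
              Adv (augP P) (augR r) γ (mixed μOld πcOld) x b)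
            - Adv (augP P) (augR r) γ (mixed μOld πcOld) x x.2) := by
      rw [Finset.sum_congr rfl fun b _ => hcol b, Finset.sum_sub_distrib,
        ← Finset.mul_sum, ← Finset.mul_sum,
        Finset.sum_ite_eq' Finset.univ x.2]
      simp only [Finset.mem_univ, if_true]
      rw [← mul_sub]
      congr 1
      have hexp : ∑ b : A, πcOld x.1 b *
            (Adv (augP P) (augR r) γ (mixed μOld πcOld) x b
              + Vval (augP P) (augR r) γ (mixed μOld πcOld) x)
          = (∑ b : A, πcOld x.1 b * Adv (augP P) (augR r) γ (mixed μOld πcOld) x b)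
            + Vval (augP P) (augR r) γ (mixed μOld πcOld) x := by
        simp_rw [mul_add]
        rw [Finset.sum_add_distrib, ← Finset.sum_mul, (hπcOld x.1).2, one_mul]
      rw [hexp]
      ring
    rw [hsum, abs_mul, abs_of_nonneg (hμnn x.1 x.2)]
    have habs : |(∑ b : A, πcOld x.1 b * Adv (augP P) (augR r) γ (mixed μOld πcOld) x b)
        - Adv (augP P) (augR r) γ (mixed μOld πcOld) x x.2| ≤ C0 + C0 := by
      refine le_trans (abs_sub _ _) (add_le_add ?_ (hC0old x x.2))
      calc |∑ b : A, πcOld x.1 b * Adv (augP P) (augR r) γ (mixed μOld πcOld) x b|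
          ≤ ∑ b : A, |πcOld x.1 b * Adv (augP P) (augR r) γ (mixed μOld πcOld) x b| :=
            Finset.abs_sum_le_sum_abs _ _
        _ ≤ ∑ b : A, πcOld x.1 b * C0 := by
            refine Finset.sum_le_sum fun b _ => ?_
            rw [abs_mul, abs_of_nonneg ((hπcOld x.1).1 b)]
            exact mul_le_mul_of_nonneg_left (hC0old x b) ((hπcOld x.1).1 b)
        _ = C0 := by rw [← Finset.sum_mul, (hπcOld x.1).2, one_mul]
    calc μOld x.1 x.2 * |(∑ b : A, πcOld x.1 b *
            Adv (augP P) (augR r) γ (mixed μOld πcOld) x b)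
          - Adv (augP P) (augR r) γ (mixed μOld πcOld) x x.2|
        ≤ Bv * (C0 + C0) := mul_le_mul (hμ x.1 x.2) habs (abs_nonneg _) hBvnn
      _ = Bv * C0 + Bv * C0 := by ring
  have hb1 := qval_diff_bound (augP P) (augR r) γ (liftPolicy πcNew) hPa hLNew hMNew
    hγ0 hγ1 (Bv * C0) hgNew
  have hb2 := qval_diff_bound (augP P) (augR r) γ (mixed μOld πcOld) hPa hMOld hLOld
    hγ0 hγ1 (Bv * C0 + Bv * C0) hgOld
  set K : ℝ := γ * (Bv * C0) / (1 - γ) with hK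
  have hKnn : 0 ≤ K := by
    apply div_nonneg (mul_nonneg hγ0 (mul_nonneg hBvnn hC0nn))
    linarith
  have hKN : K * N ≤ Δ := by
    rcases eq_or_lt_of_le hC0nn with hC00 | hC0pos
    · rw [hK, ← hC00]; simpa using hΔ0
    rcases eq_or_lt_of_le hγ0 with hγ00 | hγpos
    · rw [hK, ← hγ00]; simpa using hΔ0
    · have hT1 : γ / (1 - γ) ≤ T := tsum_geom_aux hγ0 hγ1
      have hTpos : 0 < T := lt_of_lt_of_le (div_pos hγpos (by linarith)) hT1
      have hne0 : N * C0 * T ≠ 0 :=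
        ne_of_gt (mul_pos (mul_pos hNpos hC0pos) hTpos)
      calc K * N = (γ / (1 - γ)) * (Bv * C0 * N) := by rw [hK]; ring
        _ ≤ T * (Bv * C0 * N) := mul_le_mul_of_nonneg_right hT1
            (mul_nonneg (mul_nonneg hBvnn hC0nn) hNpos.le)
        _ = (Δ / (N * C0 * T)) * (N * C0 * T) := by rw [hBv]; ring
        _ = Δ := div_mul_cancel₀ Δ hne0
  intro s a' a
  have h1 := abs_le.mp (hb1 (s, a') a)
  have h2 := abs_le.mp (hb2 (s, a') a)
  have h2' : γ * (Bv * C0 + Bv * C0) / (1 - γ) = 2 * K := by rw [hK]; ring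
  rw [h2'] at h2
  have hmid : Δ ≤ Qval (augP P) (augR r) γ (liftPolicy πcNew) (s, a') a
      - Qval (augP P) (augR r) γ (liftPolicy πcOld) (s, a') a := by
    rw [qval_lift P r γ hP hγ0 hγ1 πcNew hπcNew (s, a') a,
      qval_lift P r γ hP hγ0 hγ1 πcOld hπcOld (s, a') a]
    exact hΔle s a
  have hKle : K ≤ Δ / N := by rw [le_div_iff₀ hNpos]; exact hKN
  have hΔN : 0 ≤ Δ / N := div_nonneg hΔ0 (le_of_lt hNpos)
  have hrw : (1 - 4 / N) * Δ = Δ - 4 * (Δ / N) := by ring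
  rw [hrw]
  linarith [h1.1, h2.1, hmid]

end
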